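/- Let ℓ be a nonnegative integer. Define 𝔊(x,y,z) = Q_{4ℓ+3}(x,y)·sin z + Q_{4ℓ+3}(x,z)·sin y + (8ℓ+6)·Q_{4ℓ+2}(y,z)·cos x + Q_{4ℓ+3}(z,x)·cos y − Q_{4ℓ+3}(y,x)·cos z − (8ℓ+6)·P_{4ℓ+2}(y,z)·sin x + (8ℓ+6)(4ℓ+2)·P_{4ℓ+1}(x,y)·cos z − (8ℓ+6)(4ℓ+2)·P_{4ℓ+1}(x,z)·cos y, and let V be the vector field on ℝ³ given by V(x,y,z) = (𝔊(x,y,z), 𝔊(y,z,x), 𝔊(z,x,y)). Then V satisfies the Beltrami equation ∇×V = V. -/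

import Mathlib

noncomputable section

open Real

/-- The standard harmonic polynomial `P_n(x,y) = Re((x+iy)^n)`. -/
def polyP (n : ℕ) (x y : ℝ) : ℝ := ((x + y * Complex.I) ^ n).re

/-- The standard harmonic polynomial `Q_n(x,y) = Im((x+iy)^n)`. -/
def polyQ (n : ℕ) (x y : ℝ) : ℝ := ((x + y * Complex.I) ^ n).im

/-- Partial derivative in the `i`-th coordinate direction. -/
def pd (i : Fin 3) (F : (Fin 3 → ℝ) → ℝ) : (Fin 3 → ℝ) → ℝ :=
  fun v => deriv (fun t => F (Function.update v i t)) (v i)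

/-- Divergence of a vector field on ℝ³. -/
def div3 (V : (Fin 3 → ℝ) → (Fin 3 → ℝ)) : (Fin 3 → ℝ) → ℝ :=
  fun v => pd 0 (fun w => V w 0) v + pd 1 (fun w => V w 1) v + pd 2 (fun w => V w 2) v

/-- Curl of a vector field on ℝ³. -/
def curl3 (V : (Fin 3 → ℝ) → (Fin 3 → ℝ)) : (Fin 3 → ℝ) → (Fin 3 → ℝ) :=
  fun v => ![pd 1 (fun w => V w 2) v - pd 2 (fun w => V w 1) v,
             pd 2 (fun w => V w 0) v - pd 0 (fun w => V w 2) v,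
             pd 0 (fun w => V w 1) v - pd 1 (fun w => V w 0) v]

/-- Laplacian of a scalar function on ℝ³. -/
def lap3 (F : (Fin 3 → ℝ) → ℝ) : (Fin 3 → ℝ) → ℝ :=
  fun v => pd 0 (pd 0 F) v + pd 1 (pd 1 F) v + pd 2 (pd 2 F) v

lemma cderiv_fst (m : ℕ) (c : ℂ) (t : ℝ) :
    HasDerivAt (fun x : ℝ => ((x : ℂ) + c) ^ (m+1))
      (((m : ℂ) + 1) * (((t : ℂ) + c) ^ m)) t := by
  have h := (((hasDerivAt_id (t : ℂ)).add_const c).pow (m+1)).comp_ofReal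
  convert h using 1
  all_goals simp only [id_eq, Pi.pow_apply, Nat.add_sub_cancel]
  push_cast
  ring

lemma cderiv_snd (m : ℕ) (c : ℂ) (t : ℝ) :
    HasDerivAt (fun y : ℝ => (c + (y : ℂ) * Complex.I) ^ (m+1))
      (((m : ℂ) + 1) * ((c + (t : ℂ) * Complex.I) ^ m) * Complex.I) t := by
  have h := ((((hasDerivAt_id ((t:ℝ) : ℂ)).mul_const Complex.I).const_add c).pow (m+1)).comp_ofReal
  convert h using 1
  all_goals simp only [id_eq, Pi.pow_apply, Nat.add_sub_cancel]
  push_cast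
  ring

lemma hasDerivAt_polyP_fst (m n : ℕ) (h : n = m + 1) (y t : ℝ) :
    HasDerivAt (fun x : ℝ => polyP n x y) (((m : ℝ) + 1) * polyP m t y) t := by
  subst h
  have h3 := Complex.reCLM.hasFDerivAt.comp_hasDerivAt t (cderiv_fst m ((y:ℂ) * Complex.I) t)
  have h4 : HasDerivAt (fun x : ℝ => polyP (m+1) x y)
      ((((m : ℂ) + 1) * (((t : ℂ) + (y:ℂ)*Complex.I) ^ m)).re) t := h3
  convert h4 using 1
  simp [polyP, Complex.mul_re, Complex.add_re, Complex.add_im]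

lemma hasDerivAt_polyQ_fst (m n : ℕ) (h : n = m + 1) (y t : ℝ) :
    HasDerivAt (fun x : ℝ => polyQ n x y) (((m : ℝ) + 1) * polyQ m t y) t := by
  subst h
  have h3 := Complex.imCLM.hasFDerivAt.comp_hasDerivAt t (cderiv_fst m ((y:ℂ) * Complex.I) t)
  have h4 : HasDerivAt (fun x : ℝ => polyQ (m+1) x y)
      ((((m : ℂ) + 1) * (((t : ℂ) + (y:ℂ)*Complex.I) ^ m)).im) t := h3
  convert h4 using 1
  simp [polyQ, Complex.mul_im, Complex.add_re, Complex.add_im]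

lemma hasDerivAt_polyP_snd (m n : ℕ) (h : n = m + 1) (x t : ℝ) :
    HasDerivAt (fun y : ℝ => polyP n x y) (-(((m : ℝ) + 1) * polyQ m x t)) t := by
  subst h
  have h3 := Complex.reCLM.hasFDerivAt.comp_hasDerivAt t (cderiv_snd m (x : ℂ) t)
  have h4 : HasDerivAt (fun y : ℝ => polyP (m+1) x y)
      ((((m : ℂ) + 1) * (((x : ℂ) + (t:ℂ)*Complex.I) ^ m) * Complex.I).re) t := h3
  convert h4 using 1
  simp [polyQ, Complex.mul_re, Complex.mul_im, Complex.add_re, Complex.add_im]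

lemma hasDerivAt_polyQ_snd (m n : ℕ) (h : n = m + 1) (x t : ℝ) :
    HasDerivAt (fun y : ℝ => polyQ n x y) (((m : ℝ) + 1) * polyP m x t) t := by
  subst h
  have h3 := Complex.imCLM.hasFDerivAt.comp_hasDerivAt t (cderiv_snd m (x : ℂ) t)
  have h4 : HasDerivAt (fun y : ℝ => polyQ (m+1) x y)
      ((((m : ℂ) + 1) * (((x : ℂ) + (t:ℂ)*Complex.I) ^ m) * Complex.I).im) t := h3
  convert h4 using 1
  simp [polyP, Complex.mul_re, Complex.mul_im, Complex.add_re, Complex.add_im]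

lemma polyP_succ (n : ℕ) (x y : ℝ) :
    polyP (n+1) x y = x * polyP n x y - y * polyQ n x y := by
  simp [polyP, polyQ, pow_succ, Complex.mul_re]
  ring

lemma polyQ_succ (n : ℕ) (x y : ℝ) :
    polyQ (n+1) x y = x * polyQ n x y + y * polyP n x y := by
  simp [polyP, polyQ, pow_succ, Complex.mul_im]
  ring

lemma base_swap (l : ℕ) (x y : ℝ) :
    (((y:ℂ) + (x:ℂ) * Complex.I) ^ (4*l)) =
      (starRingEnd ℂ) (((x:ℂ) + (y:ℂ) * Complex.I) ^ (4*l)) := by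
  have h0 : ((y:ℂ) + (x:ℂ) * Complex.I)
      = Complex.I * (starRingEnd ℂ) ((x:ℂ) + (y:ℂ) * Complex.I) := by
    simp [Complex.ext_iff, Complex.mul_re, Complex.mul_im]
  rw [h0, mul_pow, map_pow, pow_mul]
  norm_num

lemma polyP_base_swap (l : ℕ) (x y : ℝ) : polyP (4*l) y x = polyP (4*l) x y := by
  simp only [polyP, base_swap l x y, Complex.conj_re]

lemma polyQ_base_swap (l : ℕ) (x y : ℝ) : polyQ (4*l) y x = -polyQ (4*l) x y := by
  simp only [polyQ, base_swap l x y, Complex.conj_im]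

lemma hG2 (l : ℕ) (a b c : ℝ) :
    HasDerivAt (fun t : ℝ =>
      polyQ (4*l+3) a t * Real.sin c + polyQ (4*l+3) a c * Real.sin t
        + (8 * l + 6 : ℝ) * polyQ (4*l+2) t c * Real.cos a
        + polyQ (4*l+3) c a * Real.cos t - polyQ (4*l+3) t a * Real.cos c
        - (8 * l + 6 : ℝ) * polyP (4*l+2) t c * Real.sin a
        + (8 * l + 6 : ℝ) * (4 * l + 2 : ℝ) * polyP (4*l+1) a t * Real.cos c
        - (8 * l + 6 : ℝ) * (4 * l + 2 : ℝ) * polyP (4*l+1) a c * Real.cos t)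
      ((4*(l:ℝ)+3) * polyP (4*l+2) a b * Real.sin c
        + polyQ (4*l+3) a c * Real.cos b
        + (8*(l:ℝ)+6) * ((4*(l:ℝ)+2) * polyQ (4*l+1) b c) * Real.cos a
        - polyQ (4*l+3) c a * Real.sin b
        - (4*(l:ℝ)+3) * polyQ (4*l+2) b a * Real.cos c
        - (8*(l:ℝ)+6) * ((4*(l:ℝ)+2) * polyP (4*l+1) b c) * Real.sin a
        - (8*(l:ℝ)+6) * (4*(l:ℝ)+2) * ((4*(l:ℝ)+1) * polyQ (4*l) a b) * Real.cos c
        + (8*(l:ℝ)+6) * (4*(l:ℝ)+2) * polyP (4*l+1) a c * Real.sin b) b := by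
  have T1 := (hasDerivAt_polyQ_snd (4*l+2) (4*l+3) (by omega) a b).mul_const (Real.sin c)
  have T2 := (Real.hasDerivAt_sin b).const_mul (polyQ (4*l+3) a c)
  have T3 := ((hasDerivAt_polyQ_fst (4*l+1) (4*l+2) (by omega) c b).const_mul
      ((8 * (l:ℝ) + 6))).mul_const (Real.cos a)
  have T4 := (Real.hasDerivAt_cos b).const_mul (polyQ (4*l+3) c a)
  have T5 := (hasDerivAt_polyQ_fst (4*l+2) (4*l+3) (by omega) a b).mul_const (Real.cos c)
  have T6 := ((hasDerivAt_polyP_fst (4*l+1) (4*l+2) (by omega) c b).const_mul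
      ((8 * (l:ℝ) + 6))).mul_const (Real.sin a)
  have T7 := ((hasDerivAt_polyP_snd (4*l) (4*l+1) (by omega) a b).const_mul
      ((8 * (l:ℝ) + 6) * (4 * (l:ℝ) + 2))).mul_const (Real.cos c)
  have T8 := (Real.hasDerivAt_cos b).const_mul
      ((8 * (l:ℝ) + 6) * (4 * (l:ℝ) + 2) * polyP (4*l+1) a c)
  have H := ((((((T1.add T2).add T3).add T4).sub T5).sub T6).add T7).sub T8
  refine HasDerivAt.congr_deriv H ?_
  push_cast
  ring

lemma hG3 (l : ℕ) (a b c : ℝ) :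
    HasDerivAt (fun t : ℝ =>
      polyQ (4*l+3) a b * Real.sin t + polyQ (4*l+3) a t * Real.sin b
        + (8 * l + 6 : ℝ) * polyQ (4*l+2) b t * Real.cos a
        + polyQ (4*l+3) t a * Real.cos b - polyQ (4*l+3) b a * Real.cos t
        - (8 * l + 6 : ℝ) * polyP (4*l+2) b t * Real.sin a
        + (8 * l + 6 : ℝ) * (4 * l + 2 : ℝ) * polyP (4*l+1) a b * Real.cos t
        - (8 * l + 6 : ℝ) * (4 * l + 2 : ℝ) * polyP (4*l+1) a t * Real.cos b)
      (polyQ (4*l+3) a b * Real.cos c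
        + (4*(l:ℝ)+3) * polyP (4*l+2) a c * Real.sin b
        + (8*(l:ℝ)+6) * ((4*(l:ℝ)+2) * polyP (4*l+1) b c) * Real.cos a
        + (4*(l:ℝ)+3) * polyQ (4*l+2) c a * Real.cos b
        + polyQ (4*l+3) b a * Real.sin c
        + (8*(l:ℝ)+6) * ((4*(l:ℝ)+2) * polyQ (4*l+1) b c) * Real.sin a
        - (8*(l:ℝ)+6) * (4*(l:ℝ)+2) * polyP (4*l+1) a b * Real.sin c
        + (8*(l:ℝ)+6) * (4*(l:ℝ)+2) * ((4*(l:ℝ)+1) * polyQ (4*l) a c) * Real.cos b) c := by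
  have T1 := (Real.hasDerivAt_sin c).const_mul (polyQ (4*l+3) a b)
  have T2 := (hasDerivAt_polyQ_snd (4*l+2) (4*l+3) (by omega) a c).mul_const (Real.sin b)
  have T3 := ((hasDerivAt_polyQ_snd (4*l+1) (4*l+2) (by omega) b c).const_mul
      ((8 * (l:ℝ) + 6))).mul_const (Real.cos a)
  have T4 := (hasDerivAt_polyQ_fst (4*l+2) (4*l+3) (by omega) a c).mul_const (Real.cos b)
  have T5 := (Real.hasDerivAt_cos c).const_mul (polyQ (4*l+3) b a)
  have T6 := ((hasDerivAt_polyP_snd (4*l+1) (4*l+2) (by omega) b c).const_mul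
      ((8 * (l:ℝ) + 6))).mul_const (Real.sin a)
  have T7 := (Real.hasDerivAt_cos c).const_mul
      ((8 * (l:ℝ) + 6) * (4 * (l:ℝ) + 2) * polyP (4*l+1) a b)
  have T8 := ((hasDerivAt_polyP_snd (4*l) (4*l+1) (by omega) a c).const_mul
      ((8 * (l:ℝ) + 6) * (4 * (l:ℝ) + 2))).mul_const (Real.cos b)
  have H := ((((((T1.add T2).add T3).add T4).sub T5).sub T6).add T7).sub T8
  refine HasDerivAt.congr_deriv H ?_
  push_cast
  ring

/-- the tetrahedral field of order `4ℓ+3` satisfies `∇×V = V`. -/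
theorem beltrami_tetrahedral_second (l : ℕ) :
    let G : ℝ → ℝ → ℝ → ℝ := fun x y z =>
      polyQ (4 * l + 3) x y * Real.sin z + polyQ (4 * l + 3) x z * Real.sin y
        + (8 * l + 6 : ℝ) * polyQ (4 * l + 2) y z * Real.cos x
        + polyQ (4 * l + 3) z x * Real.cos y - polyQ (4 * l + 3) y x * Real.cos z
        - (8 * l + 6 : ℝ) * polyP (4 * l + 2) y z * Real.sin x
        + (8 * l + 6 : ℝ) * (4 * l + 2 : ℝ) * polyP (4 * l + 1) x y * Real.cos z
        - (8 * l + 6 : ℝ) * (4 * l + 2 : ℝ) * polyP (4 * l + 1) x z * Real.cos y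
    let V : (Fin 3 → ℝ) → (Fin 3 → ℝ) := fun v =>
      ![G (v 0) (v 1) (v 2), G (v 1) (v 2) (v 0), G (v 2) (v 0) (v 1)]
    ∀ v, curl3 V v = V v := by
  intro G V v
  funext i
  fin_cases i
  · show curl3 V v 0 = V v 0
    simp only [curl3, pd, V, G, Matrix.cons_val_zero, Matrix.cons_val_one, Matrix.head_cons,
      Matrix.cons_val_two, Matrix.tail_cons, Function.update, reduceDIte, Fin.reduceEq]
    rw [(hG3 l (v 2) (v 0) (v 1)).deriv, (hG2 l (v 1) (v 2) (v 0)).deriv]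
    simp only [show (4*l+3 : ℕ) = 4*l+1+1+1 by omega, show (4*l+2 : ℕ) = 4*l+1+1 by omega,
      polyP_succ, polyQ_succ,
      polyP_base_swap l (v 0) (v 1), polyP_base_swap l (v 0) (v 2), polyP_base_swap l (v 1) (v 2),
      polyQ_base_swap l (v 0) (v 1), polyQ_base_swap l (v 0) (v 2), polyQ_base_swap l (v 1) (v 2)]
    ring
  · show curl3 V v 1 = V v 1
    simp only [curl3, pd, V, G, Matrix.cons_val_zero, Matrix.cons_val_one, Matrix.head_cons,
      Matrix.cons_val_two, Matrix.tail_cons, Function.update, reduceDIte, Fin.reduceEq]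
    rw [(hG3 l (v 0) (v 1) (v 2)).deriv, (hG2 l (v 2) (v 0) (v 1)).deriv]
    simp only [show (4*l+3 : ℕ) = 4*l+1+1+1 by omega, show (4*l+2 : ℕ) = 4*l+1+1 by omega,
      polyP_succ, polyQ_succ,
      polyP_base_swap l (v 0) (v 1), polyP_base_swap l (v 0) (v 2), polyP_base_swap l (v 1) (v 2),
      polyQ_base_swap l (v 0) (v 1), polyQ_base_swap l (v 0) (v 2), polyQ_base_swap l (v 1) (v 2)]
    ring
  · show curl3 V v 2 = V v 2
    simp only [curl3, pd, V, G, Matrix.cons_val_zero, Matrix.cons_val_one, Matrix.head_cons,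
      Matrix.cons_val_two, Matrix.tail_cons, Function.update, reduceDIte, Fin.reduceEq]
    rw [(hG3 l (v 1) (v 2) (v 0)).deriv, (hG2 l (v 0) (v 1) (v 2)).deriv]
    simp only [show (4*l+3 : ℕ) = 4*l+1+1+1 by omega, show (4*l+2 : ℕ) = 4*l+1+1 by omega,
      polyP_succ, polyQ_succ,
      polyP_base_swap l (v 0) (v 1), polyP_base_swap l (v 0) (v 2), polyP_base_swap l (v 1) (v 2),
      polyQ_base_swap l (v 0) (v 1), polyQ_base_swap l (v 0) (v 2), polyQ_base_swap l (v 1) (v 2)]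
    ring
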